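/- Let F and G be formulas in which no non-ground terms with the exception of variables occur. Let σ be an injective ground substitution such that rng(σ) ⊆ garg(F), rng(σ) ∩ garg(G) = ∅, and no member of dom(σ) occurs in F or in G. Let x̄ = dom(σ). Then ∃x̄ (F⌐⌐σ) ⊨ G if and only if F ⊨ G. -/

import Mathlib

namespace CTI

/-- Terms of first-order logic: variables and function applications.
Function symbols with empty argument lists play the role of constants. -/
inductive Tm : Type where
  | var : ℕ → Tm
  | fn  : ℕ → List Tm → Tm

/-- The variables occurring in a term. -/
def Tm.vars : Tm → List ℕ
  | .var x => [x]
  | .fn _ ts => (ts.attach.map (fun t => Tm.vars t.1)).flatten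
decreasing_by
  have h := List.sizeOf_lt_of_mem t.2; simp_wf; omega

/-- The function symbols occurring in a term. -/
def Tm.funs : Tm → List ℕ
  | .var _ => []
  | .fn f ts => f :: (ts.attach.map (fun t => Tm.funs t.1)).flatten
decreasing_by
  have h := List.sizeOf_lt_of_mem t.2; simp_wf; omega

/-- A term is ground iff it contains no variables. -/
def Tm.ground (t : Tm) : Prop := t.vars = []

/-- An interpretation (structure) over domain `D`. -/
structure Interp (D : Type) where
  fn : ℕ → List D → D
  pr : ℕ → List D → Prop

/-- Evaluation of a term under an interpretation and a variable assignment. -/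
def Tm.eval {D : Type} (I : Interp D) (a : ℕ → D) : Tm → D
  | .var x => a x
  | .fn f ts => I.fn f (ts.attach.map (fun t => Tm.eval I a t.1))
decreasing_by
  have h := List.sizeOf_lt_of_mem t.2; simp_wf; omega

/-- Formulas of first-order logic without equality. -/
inductive Fml : Type where
  | tru : Fml
  | fls : Fml
  | atom : ℕ → List Tm → Fml
  | neg : Fml → Fml
  | and : Fml → Fml → Fml
  | or : Fml → Fml → Fml
  | all : ℕ → Fml → Fml
  | ex : ℕ → Fml → Fml

/-- Satisfaction of a formula under an interpretation and an assignment. -/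
def Fml.holds {D : Type} (I : Interp D) : (ℕ → D) → Fml → Prop
  | _, .tru => True
  | _, .fls => False
  | a, .atom p ts => I.pr p (ts.map (Tm.eval I a))
  | a, .neg F => ¬ Fml.holds I a F
  | a, .and F G => Fml.holds I a F ∧ Fml.holds I a G
  | a, .or F G => Fml.holds I a F ∨ Fml.holds I a G
  | a, .all x F => ∀ d : D, Fml.holds I (Function.update a x d) F
  | a, .ex x F => ∃ d : D, Fml.holds I (Function.update a x d) F

/-- Semantic entailment: every structure (with nonempty domain) and assignment
satisfying `F` satisfies `G`. -/
def Entails (F G : Fml) : Prop :=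
  ∀ (D : Type) (_ : Nonempty D) (I : Interp D) (a : ℕ → D), F.holds I a → G.holds I a

/-- Semantic equivalence. -/
def EquivF (F G : Fml) : Prop := Entails F G ∧ Entails G F

/-- The atoms occurring in a formula, together with a polarity, relative to
the polarity `pol` of the context (`true` = positive). -/
def Fml.litsP : Bool → Fml → Set (Bool × ℕ × List Tm)
  | _, .tru => ∅
  | _, .fls => ∅
  | pol, .atom p ts => {(pol, p, ts)}
  | pol, .neg F => Fml.litsP (!pol) F
  | pol, .and F G => Fml.litsP pol F ∪ Fml.litsP pol G
  | pol, .or F G => Fml.litsP pol F ∪ Fml.litsP pol G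
  | pol, .all _ F => Fml.litsP pol F
  | pol, .ex _ F => Fml.litsP pol F

/-- lit(F): the set of pairs of an atom together with a polarity such that
the atom occurs in `F` with that polarity. -/
def Fml.lits (F : Fml) : Set (Bool × ℕ × List Tm) := Fml.litsP true F

/-- pred(F): predicates together with polarities of their occurrences. -/
def Fml.preds (F : Fml) : Set (Bool × ℕ) := {bp | ∃ ts, (bp.1, bp.2, ts) ∈ F.lits}

/-- The predicate symbols occurring in a formula (irrespective of polarity). -/
def Fml.predSyms (F : Fml) : Set ℕ := {p | ∃ b ts, (b, p, ts) ∈ F.lits}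

/-- fun(F): the function symbols (including constants) occurring in `F`. -/
def Fml.funs : Fml → Set ℕ
  | .tru => ∅
  | .fls => ∅
  | .atom _ ts => {f | ∃ t ∈ ts, f ∈ Tm.funs t}
  | .neg F => F.funs
  | .and F G => F.funs ∪ G.funs
  | .or F G => F.funs ∪ G.funs
  | .all _ F => F.funs
  | .ex _ F => F.funs

/-- The free variables of a formula. -/
def Fml.fv : Fml → Set ℕ
  | .tru => ∅
  | .fls => ∅
  | .atom _ ts => {x | ∃ t ∈ ts, x ∈ Tm.vars t}
  | .neg F => F.fv
  | .and F G => F.fv ∪ G.fv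
  | .or F G => F.fv ∪ G.fv
  | .all x F => F.fv \ {x}
  | .ex x F => F.fv \ {x}

/-- The variables occurring bound in a formula. -/
def Fml.bv : Fml → Set ℕ
  | .tru => ∅
  | .fls => ∅
  | .atom _ _ => ∅
  | .neg F => F.bv
  | .and F G => F.bv ∪ G.bv
  | .or F G => F.bv ∪ G.bv
  | .all x F => insert x F.bv
  | .ex x F => insert x F.bv

/-- All variables occurring in a formula (free or bound). -/
def Fml.varsSet : Fml → Set ℕ
  | .tru => ∅
  | .fls => ∅
  | .atom _ ts => {x | ∃ t ∈ ts, x ∈ Tm.vars t}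
  | .neg F => F.varsSet
  | .and F G => F.varsSet ∪ G.varsSet
  | .or F G => F.varsSet ∪ G.varsSet
  | .all x F => insert x F.varsSet
  | .ex x F => insert x F.varsSet

/-- Quantifier-free formulas. -/
def Fml.qfree : Fml → Prop
  | .tru => True
  | .fls => True
  | .atom _ _ => True
  | .neg F => F.qfree
  | .and F G => F.qfree ∧ G.qfree
  | .or F G => F.qfree ∧ G.qfree
  | .all _ _ => False
  | .ex _ _ => False

/-- Ground formulas: quantifier-free and without variables. -/
def Fml.isGround : Fml → Prop
  | .tru => True
  | .fls => True
  | .atom _ ts => ∀ t ∈ ts, Tm.vars t = []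
  | .neg F => F.isGround
  | .and F G => F.isGround ∧ G.isGround
  | .or F G => F.isGround ∧ G.isGround
  | .all _ _ => False
  | .ex _ _ => False

end CTI
namespace CTI

/-! ### Literals, clauses, clausal formulas -/

/-- A literal: a polarity (`true` = positive atom, `false` = negated atom),
a predicate symbol and an argument list. -/
abbrev Lit := Bool × ℕ × List Tm

/-- A clause: a finite disjunction of literals, as a list. -/
abbrev Clause := List Lit

/-- A clausal formula: a finite conjunction of clauses, as a list. -/
abbrev CForm := List Clause

/-- The complement of a literal. -/
def litCompl (l : Lit) : Lit := (!l.1, l.2.1, l.2.2)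

/-- The formula corresponding to a literal. -/
def litFml (l : Lit) : Fml := if l.1 then .atom l.2.1 l.2.2 else .neg (.atom l.2.1 l.2.2)

/-- The formula corresponding to a clause (disjunction of its literals). -/
def clauseFml (C : Clause) : Fml := C.foldr (fun l F => .or (litFml l) F) .fls

/-- The formula corresponding to a clausal formula (conjunction of its clauses). -/
def cformFml (cs : CForm) : Fml := cs.foldr (fun C F => .and (clauseFml C) F) .tru

def litGround (l : Lit) : Prop := ∀ t ∈ l.2.2, Tm.vars t = []
def clauseGround (C : Clause) : Prop := ∀ l ∈ C, litGround l
def cformGround (cs : CForm) : Prop := ∀ C ∈ cs, clauseGround C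

/-- The function symbols occurring in a clausal formula. -/
def cformFuns (cs : CForm) : Set ℕ := {f | ∃ C ∈ cs, ∃ l ∈ C, ∃ t ∈ l.2.2, f ∈ Tm.funs t}

/-- Application of a substitution to a term. -/
def Tm.applySub (σ : ℕ → Tm) : Tm → Tm
  | .var x => σ x
  | .fn f ts => .fn f (ts.attach.map (fun t => Tm.applySub σ t.1))
decreasing_by
  have h := List.sizeOf_lt_of_mem t.2; simp_wf; omega

/-- Application of a substitution to a literal. -/
def litSub (σ : ℕ → Tm) (l : Lit) : Lit := (l.1, l.2.1, l.2.2.map (Tm.applySub σ))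

/-- `C` is a substitution instance of the clause `D`. -/
def instClause (C D : Clause) : Prop := ∃ σ : ℕ → Tm, C = D.map (litSub σ)

/-- The subterm relation: `Subt s t` iff `s` occurs as a subterm of `t`. -/
inductive Subt : Tm → Tm → Prop
  | refl (t) : Subt t t
  | step {s u} (f : ℕ) (ts : List Tm) : u ∈ ts → Subt s u → Subt s (.fn f ts)

/-- Strict subterm relation. -/
def StrictSubt (s t : Tm) : Prop := Subt s t ∧ s ≠ t

/-- `Tm.builtFrom S C t`: `t` is a ground term built from function symbols in `S`,
where the symbols in `C` may additionally be used as constants. -/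
inductive Tm.builtFrom (S C : Set ℕ) : Tm → Prop
  | app {f : ℕ} {ts : List Tm} : f ∈ S → (∀ t ∈ ts, Tm.builtFrom S C t) →
      Tm.builtFrom S C (.fn f ts)
  | cst {c : ℕ} : c ∈ C → Tm.builtFrom S C (.fn c [])

/-! ### Clausal tableaux -/

/-- A node of a clausal tableau: a literal label, a side label
(`true` = red/left, `false` = blue/right; ignored for one-sided tableaux)
and the list of children in left-to-right order.  A whole tableau is the
list of children of the (unlabeled) root. -/
inductive Tab : Type where
  | node : Lit → Bool → List Tab → Tab

def Tab.lit : Tab → Lit | .node l _ _ => l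
def Tab.side : Tab → Bool | .node _ s _ => s
def Tab.children : Tab → List Tab | .node _ _ cs => cs

/-- The subtrees of a clausal tableau (given as list of children of the root)
together with the branch of (literal, side) pairs of their strict ancestors,
innermost first. -/
inductive OccIn (T : List Tab) : List (Lit × Bool) → Tab → Prop
  | top {t} : t ∈ T → OccIn T [] t
  | step {br l s cs c} : OccIn T br (.node l s cs) → c ∈ cs → OccIn T ((l, s) :: br) c

/-- Well-formedness of a (one-sided) clausal tableau below some node, for the
clausal formula `F`: the children of every node either are absent or their
literal labels form an instance of a clause in `F`. -/
inductive TabFor (F : CForm) : Tab → Prop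
  | mk {l s cs} : (cs = [] ∨ ∃ D ∈ F, instClause (cs.map Tab.lit) D) →
      (∀ c ∈ cs, TabFor F c) → TabFor F (.node l s cs)

/-- A clausal tableau for the clausal formula `F`. -/
def TableauFor (F : CForm) (T : List Tab) : Prop :=
  (T = [] ∨ ∃ D ∈ F, instClause (T.map Tab.lit) D) ∧ ∀ t ∈ T, TabFor F t

/-- Closedness of the subtree rooted at a node whose strict ancestors carry
the literals in `br`: every leaf has an ancestor labeled with its complement. -/
inductive ClosedFrom : List Lit → Tab → Prop
  | leaf {br : List Lit} {l s} : litCompl l ∈ br → ClosedFrom br (.node l s [])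
  | inner {br : List Lit} {l s cs} : cs ≠ [] → (∀ c ∈ cs, ClosedFrom (l :: br) c) →
      ClosedFrom br (.node l s cs)

/-- A closed clausal tableau: all leaves are closed (the root, being unlabeled,
must have children). -/
def ClosedTableau (T : List Tab) : Prop := T ≠ [] ∧ ∀ t ∈ T, ClosedFrom [] t

/-- All nodes of a subtree satisfy `P`. -/
inductive TabAll (P : Tab → Prop) : Tab → Prop
  | mk {l s cs} : P (.node l s cs) → (∀ c ∈ cs, TabAll P c) → TabAll P (.node l s cs)

/-! ### Two-sided clausal tableaux and interpolant extraction -/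

/-- Well-formedness of a two-sided clausal tableau below a node, for clausal
formulas `Fr` (side `true` = red) and `Fb` (side `false` = blue):
siblings have the same side, and the literal labels of the children of any
node form an instance of a clause of the formula of their side. -/
inductive TwoTabFor (Fr Fb : CForm) : Tab → Prop
  | mk {l s cs} :
      (cs = [] ∨ ∃ b : Bool, (∀ c ∈ cs, Tab.side c = b) ∧
        ∃ D ∈ (if b then Fr else Fb), instClause (cs.map Tab.lit) D) →
      (∀ c ∈ cs, TwoTabFor Fr Fb c) → TwoTabFor Fr Fb (.node l s cs)

/-- A two-sided clausal tableau for `Fr` and `Fb`. -/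
def TwoTableauFor (Fr Fb : CForm) (T : List Tab) : Prop :=
  (T = [] ∨ ∃ b : Bool, (∀ c ∈ T, Tab.side c = b) ∧
    ∃ D ∈ (if b then Fr else Fb), instClause (T.map Tab.lit) D)
  ∧ ∀ t ∈ T, TwoTabFor Fr Fb t

/-- Closedness, with the branch carrying side labels. -/
inductive SClosedFrom : List (Lit × Bool) → Tab → Prop
  | leaf {br : List (Lit × Bool)} {l s} : (∃ s', (litCompl l, s') ∈ br) →
      SClosedFrom br (.node l s [])
  | inner {br : List (Lit × Bool)} {l s cs} : cs ≠ [] →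
      (∀ c ∈ cs, SClosedFrom ((l, s) :: br) c) → SClosedFrom br (.node l s cs)

/-- The value of ipol at a closed leaf, determined by the side `s` of the leaf
and the side `ts` of its target, from the literal label `l`. -/
def leafIpol (s ts : Bool) (l : Lit) : Fml :=
  match s, ts with
  | true, true => .fls
  | true, false => litFml l
  | false, true => litFml (litCompl l)
  | false, false => .tru

/-- `Ipol br t H`: `H` is a value of ipol at the node `t` whose branch of strict
ancestors (with sides) is `br`, for some association of targets to closed leaves.
At a leaf, the target is an ancestor labeled with the complement of the leaf's
literal; at an inner node, ipol is the disjunction (side red) or conjunction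
(side blue) of the values at the children. -/
inductive Ipol : List (Lit × Bool) → Tab → Fml → Prop
  | leaf {br l s ts} : (litCompl l, ts) ∈ br →
      Ipol br (.node l s []) (leafIpol s ts l)
  | innerR {br l s cs Hs} : cs ≠ [] → (∀ c ∈ cs, Tab.side c = true) →
      cs.length = Hs.length →
      (∀ p ∈ List.zip cs Hs, Ipol ((l, s) :: br) p.1 p.2) →
      Ipol br (.node l s cs) (Hs.foldr .or .fls)
  | innerB {br l s cs Hs} : cs ≠ [] → (∀ c ∈ cs, Tab.side c = false) →
      cs.length = Hs.length →
      (∀ p ∈ List.zip cs Hs, Ipol ((l, s) :: br) p.1 p.2) →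
      Ipol br (.node l s cs) (Hs.foldr .and .tru)

/-- `IpolRoot T H`: `H` is a value of ipol at the root of the tableau `T`. -/
inductive IpolRoot : List Tab → Fml → Prop
  | rootR {T Hs} : T ≠ [] → (∀ t ∈ T, Tab.side t = true) →
      T.length = Hs.length → (∀ p ∈ List.zip T Hs, Ipol [] p.1 p.2) →
      IpolRoot T (Hs.foldr .or .fls)
  | rootB {T Hs} : T ≠ [] → (∀ t ∈ T, Tab.side t = false) →
      T.length = Hs.length → (∀ p ∈ List.zip T Hs, Ipol [] p.1 p.2) →
      IpolRoot T (Hs.foldr .and .tru)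

/-- branch_S(N): the conjunction of the literals with side `s` on the branch `br`. -/
def branchFml (s : Bool) (br : List (Lit × Bool)) : Fml :=
  ((br.filter (fun p => p.2 == s)).map (fun p => litFml p.1)).foldr .and .tru

end CTI

namespace CTI

/-- The domain of a substitution. -/
def domS (σ : ℕ → Tm) : Set ℕ := {x | σ x ≠ .var x}

/-- The range of a substitution. -/
def rngS (σ : ℕ → Tm) : Set Tm := {t | ∃ x ∈ domS σ, σ x = t}

/-- An injective substitution. -/
def InjSub (σ : ℕ → Tm) : Prop := ∀ x ∈ domS σ, ∀ y ∈ domS σ, σ x = σ y → x = y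

/-- A ground substitution. -/
def GroundSub (σ : ℕ → Tm) : Prop := ∀ x ∈ domS σ, Tm.vars (σ x) = []

/-- The terms occurring in a formula as an argument of a predicate. -/
def Fml.pargs : Fml → Set Tm
  | .tru => ∅
  | .fls => ∅
  | .atom _ ts => {t | t ∈ ts}
  | .neg F => F.pargs
  | .and F G => F.pargs ∪ G.pargs
  | .or F G => F.pargs ∪ G.pargs
  | .all _ F => F.pargs
  | .ex _ F => F.pargs

/-- garg(F): the ground terms occurring in `F` as an argument of a predicate. -/
def Fml.gargs (F : Fml) : Set Tm := {t | t ∈ F.pargs ∧ Tm.vars t = []}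

open Classical in
/-- Replace a term by its `σ`-preimage variable if it is in the range of `σ`. -/
noncomputable def topRevTm (σ : ℕ → Tm) (t : Tm) : Tm :=
  if h : ∃ x ∈ domS σ, σ x = t then .var h.choose else t

open Classical in
/-- F⌐⌐σ ('toprevsubst'): replace in `F` every occurrence of a member of
rng(σ) that is as argument of an atom by its `σ`-preimage variable. -/
noncomputable def Fml.topRev (σ : ℕ → Tm) : Fml → Fml
  | .tru => .tru
  | .fls => .fls
  | .atom p ts => .atom p (ts.map (topRevTm σ))
  | .neg F => .neg (F.topRev σ)
  | .and F G => .and (F.topRev σ) (G.topRev σ)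
  | .or F G => .or (F.topRev σ) (G.topRev σ)
  | .all x F => .all x (F.topRev σ)
  | .ex x F => .ex x (F.topRev σ)

open Classical in
/-- E⌐σ ('revsubst') on terms: replace every occurrence of a subterm in
rng(σ) that is not a strict subterm of another subterm in rng(σ) by its
`σ`-preimage variable. -/
noncomputable def revTm (σ : ℕ → Tm) : Tm → Tm
  | .var x =>
      if h : ∃ y ∈ domS σ, σ y = Tm.var x then .var h.choose else .var x
  | .fn f ts =>
      if h : ∃ y ∈ domS σ, σ y = Tm.fn f ts then .var h.choose
      else .fn f (ts.attach.map (fun t => revTm σ t.1))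
decreasing_by
  have h := List.sizeOf_lt_of_mem t.2; simp_wf; omega

/-- F⌐σ ('revsubst') on formulas. -/
noncomputable def Fml.revF (σ : ℕ → Tm) : Fml → Fml
  | .tru => .tru
  | .fls => .fls
  | .atom p ts => .atom p (ts.map (revTm σ))
  | .neg F => .neg (F.revF σ)
  | .and F G => .and (F.revF σ) (G.revF σ)
  | .or F G => .or (F.revF σ) (G.revF σ)
  | .all x F => .all x (F.revF σ)
  | .ex x F => .ex x (F.revF σ)

/-- Application of a substitution to the free variables of a formula. -/
def Fml.applySub (σ : ℕ → Tm) : Fml → Fml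
  | .tru => .tru
  | .fls => .fls
  | .atom p ts => .atom p (ts.map (Tm.applySub σ))
  | .neg F => .neg (F.applySub σ)
  | .and F G => .and (F.applySub σ) (G.applySub σ)
  | .or F G => .or (F.applySub σ) (G.applySub σ)
  | .all x F => .all x (F.applySub (fun y => if y = x then .var y else σ y))
  | .ex x F => .ex x (F.applySub (fun y => if y = x then .var y else σ y))

/-- `t` is ground or a variable. -/
def flatTm (t : Tm) : Prop := Tm.vars t = [] ∨ ∃ x, t = Tm.var x

/-- Existential quantification upon a list of variables. -/
def exN (xs : List ℕ) (F : Fml) : Fml := xs.foldr .ex F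

end CTI

namespace CTI

section Aux
variable {D : Type}

lemma tm_ind (P : Tm → Prop) (hv : ∀ x, P (.var x))
    (hf : ∀ f ts, (∀ t ∈ ts, P t) → P (.fn f ts)) : ∀ t, P t := by
  have key : ∀ n (t : Tm), sizeOf t ≤ n → P t := by
    intro n
    induction n with
    | zero => intro t h; cases t <;> simp at h
    | succ n ih =>
      intro t h
      cases t with
      | var x => exact hv x
      | fn f ts =>
        refine hf f ts (fun u hu => ih u ?_)
        have := List.sizeOf_lt_of_mem hu
        simp at h ⊢
        omega
  exact fun t => key (sizeOf t) t le_rfl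

lemma eval_fn' (I : Interp D) (a : ℕ → D) (f : ℕ) (ts : List Tm) :
    Tm.eval I a (.fn f ts) = I.fn f (ts.map (Tm.eval I a)) := by
  rw [Tm.eval]
  congr 1
  simp [List.attach_map_val]

lemma mem_vars_fn {x f : ℕ} {ts : List Tm} :
    x ∈ Tm.vars (.fn f ts) ↔ ∃ u ∈ ts, x ∈ Tm.vars u := by
  rw [Tm.vars]
  simp [List.mem_flatten, List.mem_attach]

end Aux
section Aux2
variable {D D' : Type}

lemma eval_congr (I : Interp D) :
    ∀ t : Tm, ∀ a a' : ℕ → D, (∀ x ∈ Tm.vars t, a x = a' x) →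
      Tm.eval I a t = Tm.eval I a' t := by
  refine tm_ind _ (fun x a a' h => ?_) (fun f ts ih a a' h => ?_)
  · simpa [Tm.eval] using h x (by simp [Tm.vars])
  · rw [eval_fn', eval_fn']
    congr 1
    exact List.map_congr_left fun u hu =>
      ih u hu a a' (fun x hx => h x (mem_vars_fn.mpr ⟨u, hu, hx⟩))

lemma eval_ground (I : Interp D) {t : Tm} (h : Tm.vars t = []) (a a' : ℕ → D) :
    Tm.eval I a t = Tm.eval I a' t :=
  eval_congr I t a a' (fun x hx => by simp [h] at hx)

lemma holds_congr (I : Interp D) :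
    ∀ F : Fml, ∀ a a' : ℕ → D, (∀ y ∈ F.varsSet, a y = a' y) →
      (F.holds I a ↔ F.holds I a') := by
  intro F
  induction F with
  | tru => intro a a' h; simp [Fml.holds]
  | fls => intro a a' h; simp [Fml.holds]
  | atom p ts =>
    intro a a' h
    simp only [Fml.holds]
    have : ts.map (Tm.eval I a) = ts.map (Tm.eval I a') :=
      List.map_congr_left fun t ht =>
        eval_congr I t a a' (fun x hx => h x ⟨t, ht, hx⟩)
    rw [this]
  | neg F ih => intro a a' h; simp only [Fml.holds]; rw [ih a a' h]
  | and F G ihF ihG =>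
    intro a a' h
    simp only [Fml.holds]
    rw [ihF a a' (fun y hy => h y (Or.inl hy)), ihG a a' (fun y hy => h y (Or.inr hy))]
  | or F G ihF ihG =>
    intro a a' h
    simp only [Fml.holds]
    rw [ihF a a' (fun y hy => h y (Or.inl hy)), ihG a a' (fun y hy => h y (Or.inr hy))]
  | all x F ih =>
    intro a a' h
    simp only [Fml.holds]
    refine forall_congr' fun d => ih _ _ (fun y hy => ?_)
    by_cases hxy : y = x
    · subst hxy; simp
    · simp only [Function.update_apply, if_neg hxy]
      exact h y (by simp [Fml.varsSet, hxy, hy])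
  | ex x F ih =>
    intro a a' h
    simp only [Fml.holds]
    refine exists_congr fun d => ih _ _ (fun y hy => ?_)
    by_cases hxy : y = x
    · subst hxy; simp
    · simp only [Function.update_apply, if_neg hxy]
      exact h y (by simp [Fml.varsSet, hxy, hy])

end Aux2
section Aux3
variable {D : Type}

lemma vars_topRevTm (σ : ℕ → Tm) (t : Tm) :
    ∀ y ∈ Tm.vars (topRevTm σ t), y ∈ Tm.vars t ∨ y ∈ domS σ := by
  intro y hy
  by_cases h : ∃ x ∈ domS σ, σ x = t
  · rw [topRevTm, dif_pos h] at hy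
    simp [Tm.vars] at hy
    subst hy
    exact Or.inr h.choose_spec.1
  · rw [topRevTm, dif_neg h] at hy
    exact Or.inl hy

lemma pargs_topRev (σ : ℕ → Tm) :
    ∀ F : Fml, ∀ t' ∈ (F.topRev σ).pargs, ∃ t ∈ F.pargs, t' = topRevTm σ t := by
  intro F
  induction F with
  | tru => simp [Fml.topRev, Fml.pargs]
  | fls => simp [Fml.topRev, Fml.pargs]
  | atom p ts =>
    intro t' ht'
    simp only [Fml.topRev, Fml.pargs, Set.mem_setOf_eq, List.mem_map] at ht'
    obtain ⟨t, ht, rfl⟩ := ht'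
    exact ⟨t, ht, rfl⟩
  | neg F ih => exact ih
  | and F G ihF ihG =>
    intro t' ht'
    rcases ht' with h | h
    · obtain ⟨t, ht, rfl⟩ := ihF t' h; exact ⟨t, Or.inl ht, rfl⟩
    · obtain ⟨t, ht, rfl⟩ := ihG t' h; exact ⟨t, Or.inr ht, rfl⟩
  | or F G ihF ihG =>
    intro t' ht'
    rcases ht' with h | h
    · obtain ⟨t, ht, rfl⟩ := ihF t' h; exact ⟨t, Or.inl ht, rfl⟩
    · obtain ⟨t, ht, rfl⟩ := ihG t' h; exact ⟨t, Or.inr ht, rfl⟩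
  | all x F ih => exact ih
  | ex x F ih => exact ih

lemma varsSet_topRev (σ : ℕ → Tm) :
    ∀ F : Fml, ∀ y ∈ (F.topRev σ).varsSet, y ∈ F.varsSet ∨ y ∈ domS σ := by
  intro F
  induction F with
  | tru => simp [Fml.topRev, Fml.varsSet]
  | fls => simp [Fml.topRev, Fml.varsSet]
  | atom p ts =>
    intro y hy
    simp only [Fml.topRev, Fml.varsSet, Set.mem_setOf_eq, List.mem_map] at hy
    obtain ⟨t', ⟨t, ht, rfl⟩, hv⟩ := hy
    rcases vars_topRevTm σ t y hv with h | h
    · exact Or.inl ⟨t, ht, h⟩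
    · exact Or.inr h
  | neg F ih => exact ih
  | and F G ihF ihG =>
    intro y hy
    rcases hy with h | h
    · rcases ihF y h with h' | h'
      · exact Or.inl (Or.inl h')
      · exact Or.inr h'
    · rcases ihG y h with h' | h'
      · exact Or.inl (Or.inr h')
      · exact Or.inr h'
  | or F G ihF ihG =>
    intro y hy
    rcases hy with h | h
    · rcases ihF y h with h' | h'
      · exact Or.inl (Or.inl h')
      · exact Or.inr h'
    · rcases ihG y h with h' | h'
      · exact Or.inl (Or.inr h')
      · exact Or.inr h'
  | all x F ih =>
    intro y hy
    simp only [Fml.topRev, Fml.varsSet, Set.mem_insert_iff] at hy ⊢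
    rcases hy with rfl | h
    · exact Or.inl (Or.inl rfl)
    · rcases ih y h with h' | h'
      · exact Or.inl (Or.inr h')
      · exact Or.inr h'
  | ex x F ih =>
    intro y hy
    simp only [Fml.topRev, Fml.varsSet, Set.mem_insert_iff] at hy ⊢
    rcases hy with rfl | h
    · exact Or.inl (Or.inl rfl)
    · rcases ih y h with h' | h'
      · exact Or.inl (Or.inr h')
      · exact Or.inr h'

lemma flat_topRevTm (σ : ℕ → Tm) {t : Tm} (h : flatTm t) : flatTm (topRevTm σ t) := by
  by_cases hh : ∃ x ∈ domS σ, σ x = t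
  · rw [topRevTm, dif_pos hh]; exact Or.inr ⟨_, rfl⟩
  · rw [topRevTm, dif_neg hh]; exact h

lemma exN_intro (I : Interp D) (H : Fml) :
    ∀ (xs : List ℕ) (a a' : ℕ → D), (∀ y, y ∉ xs → a' y = a y) →
      H.holds I a' → (exN xs H).holds I a := by
  intro xs
  induction xs with
  | nil =>
    intro a a' h hH
    have : a' = a := funext fun y => h y (by simp)
    rw [← this]
    simpa [exN] using hH
  | cons x xs ih =>
    intro a a' h hH
    refine ⟨a' x, ih (Function.update a x (a' x)) a' (fun y hy => ?_) hH⟩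
    by_cases hxy : y = x
    · subst hxy; simp
    · rw [Function.update_apply, if_neg hxy]
      exact h y (by simp [hxy, hy])

lemma exN_elim (I : Interp D) (H : Fml) :
    ∀ (xs : List ℕ) (a : ℕ → D), (exN xs H).holds I a →
      ∃ a₂ : ℕ → D, (∀ y, y ∉ xs → a₂ y = a y) ∧ H.holds I a₂ := by
  intro xs
  induction xs with
  | nil => intro a h; exact ⟨a, fun y _ => rfl, by simpa [exN] using h⟩
  | cons x xs ih =>
    intro a h
    obtain ⟨d, hd⟩ := h
    obtain ⟨a₂, ha₂, hH⟩ := ih (Function.update a x d) hd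
    refine ⟨a₂, fun y hy => ?_, hH⟩
    simp only [List.mem_cons, not_or] at hy
    rw [ha₂ y hy.2, Function.update_apply, if_neg hy.1]

end Aux3
section Aux4
variable {D D' : Type}

/-- Key lemma C: within one structure, `F.topRev σ` under `b'` behaves like `F` under `b`,
when `b'` maps each `x ∈ dom σ` to the value of `σ x` and agrees with `b` elsewhere. -/
lemma lemC (I : Interp D) (σ : ℕ → Tm) (hg : GroundSub σ) :
    ∀ (F : Fml) (b b' : ℕ → D),
      (∀ t ∈ F.pargs, flatTm t) →
      (∀ x ∈ domS σ, x ∉ F.varsSet) →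
      (∀ x ∈ domS σ, b' x = Tm.eval I b (σ x)) →
      (∀ y ∈ F.varsSet, y ∉ domS σ → b' y = b y) →
      (F.holds I b ↔ (F.topRev σ).holds I b') := by
  intro F
  induction F with
  | tru => intro b b' _ _ _ _; simp [Fml.topRev, Fml.holds]
  | fls => intro b b' _ _ _ _; simp [Fml.topRev, Fml.holds]
  | atom p ts =>
    intro b b' hflat hdom hval hagr
    simp only [Fml.topRev, Fml.holds]
    have : (ts.map (topRevTm σ)).map (Tm.eval I b') = ts.map (Tm.eval I b) := by
      rw [List.map_map]
      refine List.map_congr_left fun t ht => ?_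
      show Tm.eval I b' (topRevTm σ t) = Tm.eval I b t
      by_cases h : ∃ x ∈ domS σ, σ x = t
      · rw [topRevTm, dif_pos h]
        have hc := h.choose_spec
        rw [show Tm.eval I b' (.var h.choose) = b' h.choose from by simp [Tm.eval]]
        rw [hval h.choose hc.1, hc.2]
      · rw [topRevTm, dif_neg h]
        rcases hflat t ht with hgr | ⟨y, rfl⟩
        · exact eval_ground I hgr b' b
        · show Tm.eval I b' (.var y) = Tm.eval I b (.var y)
          have hy : y ∈ Fml.varsSet (.atom p ts) := ⟨_, ht, by simp [Tm.vars]⟩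
          have : y ∉ domS σ := fun hyd => hdom y hyd hy
          simp only [Tm.eval]
          exact hagr y hy this
    rw [this]
  | neg F ih =>
    intro b b' hflat hdom hval hagr
    simp only [Fml.topRev, Fml.holds]
    rw [ih b b' hflat hdom hval hagr]
  | and F G ihF ihG =>
    intro b b' hflat hdom hval hagr
    simp only [Fml.topRev, Fml.holds]
    rw [ihF b b' (fun t ht => hflat t (Or.inl ht)) (fun x hx h => hdom x hx (Or.inl h)) hval
        (fun y hy => hagr y (Or.inl hy)),
      ihG b b' (fun t ht => hflat t (Or.inr ht)) (fun x hx h => hdom x hx (Or.inr h)) hval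
        (fun y hy => hagr y (Or.inr hy))]
  | or F G ihF ihG =>
    intro b b' hflat hdom hval hagr
    simp only [Fml.topRev, Fml.holds]
    rw [ihF b b' (fun t ht => hflat t (Or.inl ht)) (fun x hx h => hdom x hx (Or.inl h)) hval
        (fun y hy => hagr y (Or.inl hy)),
      ihG b b' (fun t ht => hflat t (Or.inr ht)) (fun x hx h => hdom x hx (Or.inr h)) hval
        (fun y hy => hagr y (Or.inr hy))]
  | all x F ih =>
    intro b b' hflat hdom hval hagr
    simp only [Fml.topRev, Fml.holds]
    refine forall_congr' fun d => ih (Function.update b x d) (Function.update b' x d)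
      hflat (fun z hz h => hdom z hz (Set.mem_insert_of_mem _ h)) (fun z hz => ?_) (fun y hy hyd => ?_)
    · have hzx : z ≠ x := fun h => hdom z hz (h ▸ Set.mem_insert _ _)
      rw [Function.update_apply, if_neg hzx, hval z hz]
      exact eval_ground I (hg z hz) b (Function.update b x d)
    · by_cases hxy : y = x
      · subst hxy; simp
      · rw [Function.update_apply, if_neg hxy, Function.update_apply, if_neg hxy]
        exact hagr y (Set.mem_insert_of_mem _ hy) hyd
  | ex x F ih =>
    intro b b' hflat hdom hval hagr
    simp only [Fml.topRev, Fml.holds]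
    refine exists_congr fun d => ih (Function.update b x d) (Function.update b' x d)
      hflat (fun z hz h => hdom z hz (Set.mem_insert_of_mem _ h)) (fun z hz => ?_) (fun y hy hyd => ?_)
    · have hzx : z ≠ x := fun h => hdom z hz (h ▸ Set.mem_insert _ _)
      rw [Function.update_apply, if_neg hzx, hval z hz]
      exact eval_ground I (hg z hz) b (Function.update b x d)
    · by_cases hxy : y = x
      · subst hxy; simp
      · rw [Function.update_apply, if_neg hxy, Function.update_apply, if_neg hxy]
        exact hagr y (Set.mem_insert_of_mem _ hy) hyd

/-- Key lemma D: transfer along a surjection `π` that respects predicates and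
ground predicate arguments, for flat formulas. -/
lemma lemD (I : Interp D) (J : Interp D') (π : D' → D)
    (hsur : ∀ d : D, ∃ d', π d' = d)
    (hpr : ∀ p ds, J.pr p ds ↔ I.pr p (ds.map π)) :
    ∀ (F : Fml) (b : ℕ → D'),
      (∀ t ∈ F.pargs, flatTm t) →
      (∀ t ∈ F.pargs, Tm.vars t = [] →
        ∀ (c : ℕ → D') (c' : ℕ → D), π (Tm.eval J c t) = Tm.eval I c' t) →
      (F.holds J b ↔ F.holds I (fun y => π (b y))) := by
  intro F
  induction F with
  | tru => intro b _ _; simp [Fml.holds]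
  | fls => intro b _ _; simp [Fml.holds]
  | atom p ts =>
    intro b hflat hgr
    simp only [Fml.holds]
    rw [hpr]
    have : (ts.map (Tm.eval J b)).map π = ts.map (Tm.eval I (fun y => π (b y))) := by
      rw [List.map_map]
      refine List.map_congr_left fun t ht => ?_
      rcases hflat t ht with hgrd | ⟨y, rfl⟩
      · exact hgr t ht hgrd b _
      · simp [Tm.eval]
    rw [this]
  | neg F ih =>
    intro b hflat hgr
    simp only [Fml.holds]
    rw [ih b hflat hgr]
  | and F G ihF ihG =>
    intro b hflat hgr
    simp only [Fml.holds]
    rw [ihF b (fun t ht => hflat t (Or.inl ht)) (fun t ht => hgr t (Or.inl ht)),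
      ihG b (fun t ht => hflat t (Or.inr ht)) (fun t ht => hgr t (Or.inr ht))]
  | or F G ihF ihG =>
    intro b hflat hgr
    simp only [Fml.holds]
    rw [ihF b (fun t ht => hflat t (Or.inl ht)) (fun t ht => hgr t (Or.inl ht)),
      ihG b (fun t ht => hflat t (Or.inr ht)) (fun t ht => hgr t (Or.inr ht))]
  | all x F ih =>
    intro b hflat hgr
    simp only [Fml.holds]
    constructor
    · intro h d
      obtain ⟨d', rfl⟩ := hsur d
      have := (ih (Function.update b x d') hflat hgr).mp (h d')
      refine (holds_congr I F _ _ (fun y _ => ?_)).mp this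
      by_cases hxy : y = x
      · subst hxy; simp
      · simp [Function.update_apply, hxy]
    · intro h d'
      have := h (π d')
      refine (ih (Function.update b x d') hflat hgr).mpr
        ((holds_congr I F _ _ (fun y _ => ?_)).mp this)
      by_cases hxy : y = x
      · subst hxy; simp
      · simp [Function.update_apply, hxy]
  | ex x F ih =>
    intro b hflat hgr
    simp only [Fml.holds]
    constructor
    · rintro ⟨d', hd'⟩
      refine ⟨π d', ?_⟩
      have := (ih (Function.update b x d') hflat hgr).mp hd'
      refine (holds_congr I F _ _ (fun y _ => ?_)).mp this
      by_cases hxy : y = x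
      · subst hxy; simp
      · simp [Function.update_apply, hxy]
    · rintro ⟨d, hd⟩
      obtain ⟨d', rfl⟩ := hsur d
      refine ⟨d', (ih (Function.update b x d') hflat hgr).mpr
        ((holds_congr I F _ _ (fun y _ => ?_)).mp hd)⟩
      by_cases hxy : y = x
      · subst hxy; simp
      · simp [Function.update_apply, hxy]

end Aux4
section Aux5
variable {D : Type}

/-- Auxiliary structure on `D × Tm`: first component mimics `I`, second records the term. -/
def mkJ (I : Interp D) (π : D × Tm → D) : Interp (D × Tm) :=
  ⟨fun f ds => (I.fn f (ds.map Prod.fst), Tm.fn f (ds.map Prod.snd)),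
   fun p ds => I.pr p (ds.map π)⟩

lemma mkJ_eval_ground (I : Interp D) (π : D × Tm → D) :
    ∀ t : Tm, Tm.vars t = [] → ∀ (b : ℕ → D × Tm) (c : ℕ → D),
      Tm.eval (mkJ I π) b t = (Tm.eval I c t, t) := by
  refine tm_ind _ (fun x h => by simp [Tm.vars] at h) (fun f ts ih h b c => ?_)
  have hsub : ∀ u ∈ ts, Tm.vars u = [] := by
    intro u hu
    rw [List.eq_nil_iff_forall_not_mem]
    intro x hx
    have : x ∈ Tm.vars (.fn f ts) := mem_vars_fn.mpr ⟨u, hu, hx⟩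
    rw [h] at this
    simp at this
  rw [eval_fn', eval_fn']
  show (I.fn f ((ts.map (Tm.eval (mkJ I π) b)).map Prod.fst),
      Tm.fn f ((ts.map (Tm.eval (mkJ I π) b)).map Prod.snd)) = _
  rw [List.map_map, List.map_map]
  congr 1
  · congr 1
    refine List.map_congr_left fun u hu => ?_
    show (Tm.eval (mkJ I π) b u).1 = Tm.eval I c u
    rw [ih u hu (hsub u hu) b c]
  · congr 1
    rw [show (Prod.snd ∘ Tm.eval (mkJ I π) b) = fun u => (Tm.eval (mkJ I π) b u).2 from rfl]
    conv_rhs => rw [← List.map_id ts]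
    refine List.map_congr_left fun u hu => ?_
    rw [ih u hu (hsub u hu) b c]; rfl

end Aux5
/-- Inessential quantifications in entailments for terms. -/
theorem inessential_quantifications_terms (F G : Fml) (σ : ℕ → Tm)
    (hflatF : ∀ t ∈ F.pargs, flatTm t)
    (hflatG : ∀ t ∈ G.pargs, flatTm t)
    (hinj : InjSub σ) (hg : GroundSub σ)
    (hrng : rngS σ ⊆ F.gargs)
    (hdisj : rngS σ ∩ G.gargs = ∅)
    (hdomF : ∀ x ∈ domS σ, x ∉ F.varsSet)
    (hdomG : ∀ x ∈ domS σ, x ∉ G.varsSet)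
    (xs : List ℕ) (hxs : ∀ x : ℕ, x ∈ xs ↔ x ∈ domS σ) :
    Entails (exN xs (F.topRev σ)) G ↔ Entails F G := by
  constructor
  · -- Entails (exN xs (F.topRev σ)) G → Entails F G
    intro hE D Dne I a hF
    classical
    set a' : ℕ → D := fun y => if y ∈ domS σ then Tm.eval I a (σ y) else a y with ha'
    have h1 : (F.topRev σ).holds I a' :=
      (lemC I σ hg F a a' hflatF hdomF
        (fun x hx => by simp [ha', hx])
        (fun y hy hyd => by simp [ha', hyd])).mp hF
    exact hE D Dne I a (exN_intro I _ xs a a'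
      (fun y hy => by
        have hnd : y ∉ domS σ := fun c => hy ((hxs y).mpr c)
        simp [ha', hnd]) h1)
  · -- Entails F G → Entails (exN xs (F.topRev σ)) G
    intro hFG D Dne I a hEx
    classical
    obtain ⟨a₂, ha₂, h₂⟩ := exN_elim I _ xs a hEx
    set π : D × Tm → D :=
      fun dt => if h : ∃ x ∈ domS σ, σ x = dt.2 then a₂ h.choose else dt.1 with hπ
    set J := mkJ I π with hJ
    have hnv : ∀ y : ℕ, ¬ ∃ x ∈ domS σ, σ x = Tm.var y := by
      rintro y ⟨x, hx, hσ⟩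
      have hgx := hg x hx
      rw [hσ] at hgx
      simp [Tm.vars] at hgx
    have hπvar : ∀ (d : D) (y : ℕ), π (d, Tm.var y) = d := by
      intro d y
      simp only [hπ]
      rw [dif_neg (hnv y)]
    have hsur : ∀ d : D, ∃ d', π d' = d := fun d => ⟨(d, Tm.var 0), hπvar d 0⟩
    have hpr : ∀ p ds, J.pr p ds ↔ I.pr p (ds.map π) := fun p ds => Iff.rfl
    set b : ℕ → D × Tm := fun y => (a₂ y, Tm.var y) with hb
    have hπb : ∀ y, π (b y) = a₂ y := fun y => hπvar _ y
    set b' : ℕ → D × Tm := fun y => if y ∈ domS σ then Tm.eval J b (σ y) else b y with hb'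
    have hπb' : ∀ y, π (b' y) = a₂ y := by
      intro y
      by_cases hyd : y ∈ domS σ
      · have heval : Tm.eval J b (σ y) = (Tm.eval I a₂ (σ y), σ y) :=
          mkJ_eval_ground I π (σ y) (hg y hyd) b a₂
        rw [show b' y = Tm.eval J b (σ y) from by simp [hb', hyd], heval]
        have hex : ∃ x ∈ domS σ, σ x = σ y := ⟨y, hyd, rfl⟩
        simp only [hπ]
        rw [dif_pos hex]
        have hc := hex.choose_spec
        rw [hinj _ hc.1 _ hyd hc.2]
      · rw [show b' y = b y from by simp [hb', hyd]]
        exact hπb y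
    have hC : F.holds J b ↔ (F.topRev σ).holds J b' :=
      lemC J σ hg F b b' hflatF hdomF
        (fun x hx => by simp [hb', hx])
        (fun y hy hyd => by simp [hb', hyd])
    have hflatT : ∀ t ∈ (F.topRev σ).pargs, flatTm t := by
      intro t ht
      obtain ⟨u, hu, rfl⟩ := pargs_topRev σ F t ht
      exact flat_topRevTm σ (hflatF u hu)
    have hgrT : ∀ t ∈ (F.topRev σ).pargs, Tm.vars t = [] →
        ∀ (c : ℕ → D × Tm) (c' : ℕ → D), π (Tm.eval J c t) = Tm.eval I c' t := by
      intro t ht hgrd c c'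
      obtain ⟨u, hu, rfl⟩ := pargs_topRev σ F t ht
      by_cases h : ∃ x ∈ domS σ, σ x = u
      · rw [topRevTm, dif_pos h] at hgrd
        simp [Tm.vars] at hgrd
      · rw [topRevTm, dif_neg h] at hgrd ⊢
        rw [mkJ_eval_ground I π u hgrd c c']
        simp only [hπ]
        rw [dif_neg h]
    have hD1 := lemD I J π hsur hpr (F.topRev σ) b' hflatT hgrT
    have hTop : (F.topRev σ).holds I (fun y => π (b' y)) :=
      (holds_congr I (F.topRev σ) a₂ _ (fun y _ => (hπb' y).symm)).mp h₂
    have hFJ : F.holds J b := hC.mpr (hD1.mpr hTop)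
    have hGJ : G.holds J b := hFG (D × Tm) ⟨(Classical.choice Dne, Tm.var 0)⟩ J b hFJ
    have hgG : ∀ t ∈ G.pargs, Tm.vars t = [] →
        ∀ (c : ℕ → D × Tm) (c' : ℕ → D), π (Tm.eval J c t) = Tm.eval I c' t := by
      intro t ht hgrd c c'
      have hnr : ¬ ∃ x ∈ domS σ, σ x = t := by
        rintro ⟨x, hx, hσ⟩
        have hmem : t ∈ rngS σ ∩ G.gargs := ⟨⟨x, hx, hσ⟩, ht, hgrd⟩
        rw [hdisj] at hmem
        exact hmem
      rw [mkJ_eval_ground I π t hgrd c c']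
      simp only [hπ]
      rw [dif_neg hnr]
    have hGI : G.holds I (fun y => π (b y)) :=
      (lemD I J π hsur hpr G b hflatG hgG).mp hGJ
    have hGa₂ : G.holds I a₂ := (holds_congr I G _ a₂ (fun y _ => hπb y)).mp hGI
    exact (holds_congr I G a₂ a
      (fun y hy => ha₂ y (fun hxsy => hdomG _ ((hxs y).mp hxsy) hy))).mp hGa₂
end CTI
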